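/- In the matrix algebra M_k(F), there exists a sequence consisting of each of the k^2 matrix units E_{i,j} (1 \le i,j \le k) exactly once, whose product (in that order) equals E_{1,1}. -/

import Mathlib

namespace Stmt13Aux

open Matrix

/-- Edges of the block for vertex `n`: a closed walk `0 → n → n → 1 → n → 2 → n → ⋯
→ (n-1) → n → 0` covering exactly the pairs whose max is `n`. -/
def blockE (n : ℕ) : List (ℕ × ℕ) :=
  (0, n) :: (n, n) :: (((List.range' 1 (n-1)).flatMap fun j => [(n,j),(j,n)]) ++ [(n,0)])

/-- All edges: blocks for `n = k-1, …, 1` followed by the loop at `0`. -/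
def allE (k : ℕ) : List (ℕ × ℕ) :=
  ((List.range' 1 (k-1)).reverse.flatMap blockE) ++ [(0,0)]

lemma length_flatpairs (n : ℕ) (L : List ℕ) :
    ((L.flatMap fun j => ([(n,j),(j,n)] : List (ℕ × ℕ)))).length = 2 * L.length := by
  induction L with
  | nil => simp
  | cons a L ih => simp [ih]; ring

lemma length_blockE (n : ℕ) : (blockE n).length = 2*(n-1) + 3 := by
  rw [blockE]
  simp only [List.length_cons, List.length_append, length_flatpairs, List.length_singleton, List.length_nil,
    List.length_range']

lemma length_flat (t : ℕ) : ((List.range' 1 t).reverse.flatMap blockE).length = t^2 + 2*t := by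
  induction t with
  | zero => simp
  | succ m ih =>
      rw [List.range'_1_concat]
      simp only [List.reverse_append, List.reverse_cons, List.reverse_nil, List.nil_append,
        List.singleton_append, List.flatMap_cons, List.length_append, ih, length_blockE]
      ring_nf
      omega

lemma length_allE (k : ℕ) (hk : 0 < k) : (allE k).length = k^2 := by
  have := length_flat (k-1)
  simp only [allE, List.length_append, this, List.length_singleton]
  nlinarith [Nat.sub_add_cancel hk]

lemma mem_blockE {n i j : ℕ} (hn : 1 ≤ n) (hi : i ≤ n) (hj : j ≤ n) (h : i = n ∨ j = n) :
    (i, j) ∈ blockE n := by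
  rcases h with rfl | rfl
  · -- i = n
    rcases Nat.eq_zero_or_pos j with rfl | hj0
    · exact List.mem_cons_of_mem _ (List.mem_cons_of_mem _
        (List.mem_append_right _ (List.mem_singleton.mpr rfl)))
    · rcases eq_or_lt_of_le hj with rfl | hjlt
      · exact List.mem_cons_of_mem _ (List.mem_cons_self)
      · refine List.mem_cons_of_mem _ (List.mem_cons_of_mem _ (List.mem_append_left _ ?_))
        exact List.mem_flatMap.mpr ⟨j, List.mem_range'_1.mpr ⟨hj0, by omega⟩, by simp⟩
  · -- j = n
    rcases Nat.eq_zero_or_pos i with rfl | hi0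
    · exact List.mem_cons_self
    · rcases eq_or_lt_of_le hi with rfl | hilt
      · exact List.mem_cons_of_mem _ (List.mem_cons_self)
      · refine List.mem_cons_of_mem _ (List.mem_cons_of_mem _ (List.mem_append_left _ ?_))
        exact List.mem_flatMap.mpr ⟨i, List.mem_range'_1.mpr ⟨hi0, by omega⟩, by simp⟩

lemma mem_allE {k i j : ℕ} (hi : i < k) (hj : j < k) : (i, j) ∈ allE k := by
  rcases Nat.eq_zero_or_pos (max i j) with hm | hm
  · have h1 : i = 0 := by omega
    have h2 : j = 0 := by omega
    subst h1; subst h2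
    exact List.mem_append_right _ (List.mem_singleton.mpr rfl)
  · refine List.mem_append_left _ (List.mem_flatMap.mpr ⟨max i j, ?_, ?_⟩)
    · rw [List.mem_reverse]
      exact List.mem_range'_1.mpr ⟨hm, by omega⟩
    · exact mem_blockE hm (le_max_left _ _) (le_max_right _ _) (by omega)

section Product

variable {F : Type*} [Field F] {k : ℕ}

/-- Cast a natural number (smaller than `k`) into `Fin k`. -/
def c (hk : 0 < k) (n : ℕ) : Fin k := ⟨n % k, Nat.mod_lt _ hk⟩

def f (F : Type*) [Field F] (hk : 0 < k) (p : ℕ × ℕ) : Matrix (Fin k) (Fin k) F :=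
  single (c hk p.1) (c hk p.2) 1

lemma prod_inner (hk : 0 < k) (n m : ℕ) :
    single (c hk n) (c hk n) (1 : F) *
      (((List.range' 1 m).flatMap fun j => [(n,j),(j,n)]).map (f F hk)).prod =
    single (c hk n) (c hk n) 1 := by
  induction m with
  | zero => simp
  | succ m ih =>
      rw [List.range'_1_concat]
      simp only [List.flatMap_append, List.map_append, List.prod_append, ← mul_assoc, ih]
      simp [f, mul_assoc]

lemma prod_blockE (hk : 0 < k) (n : ℕ) :
    ((blockE n).map (f F hk)).prod = single (c hk 0) (c hk 0) (1 : F) := by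
  simp only [blockE, List.map_cons, List.prod_cons, List.map_append, List.prod_append,
    List.map_nil, List.prod_nil, mul_one, List.map_singleton]
  rw [← mul_assoc (f F hk (n,n))]
  rw [show f F hk (n,n) = single (c hk n) (c hk n) (1 : F) from rfl, prod_inner hk n]
  simp [f]

lemma prod_flat (hk : 0 < k) (L : List ℕ) :
    ((L.flatMap blockE).map (f F hk)).prod * single (c hk 0) (c hk 0) (1 : F) =
      single (c hk 0) (c hk 0) 1 := by
  induction L with
  | nil => simp
  | cons n L ih =>
      simp only [List.flatMap_cons, List.map_append, List.prod_append, mul_assoc, ih,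
        prod_blockE]
      simp

lemma prod_allE (hk : 0 < k) :
    ((allE k).map (f F hk)).prod = single (c hk 0) (c hk 0) (1 : F) := by
  simp only [allE, List.map_append, List.prod_append, List.map_cons, List.map_nil,
    List.prod_cons, List.prod_nil, mul_one]
  have : f F hk (0,0) = single (c hk 0) (c hk 0) (1 : F) := rfl
  rw [this, prod_flat]

end Product

end Stmt13Aux

/-- In `M_k(F)` there is a sequence consisting of each of the `k²`
matrix units `E_{i,j}` exactly once whose product (in that order) equals `E_{1,1}`. -/
theorem stmt_13 {F : Type*} [Field F] (k : ℕ) (hk : 0 < k) :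
    ∃ l : List (Fin k × Fin k),
      l.Perm (Finset.univ : Finset (Fin k × Fin k)).toList ∧
      (l.map fun p => Matrix.single p.1 p.2 (1 : F)).prod =
        Matrix.single ⟨0, hk⟩ ⟨0, hk⟩ (1 : F) := by
  classical
  open Stmt13Aux in
  refine ⟨(allE k).map (fun q => (c hk q.1, c hk q.2)), ?_, ?_⟩
  · -- permutation
    have hcself : ∀ a : Fin k, c hk (a : ℕ) = a := fun a =>
      Fin.ext (Nat.mod_eq_of_lt a.isLt)
    have hsub : (Finset.univ : Finset (Fin k × Fin k)).toList ⊆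
        (allE k).map (fun q => (c hk q.1, c hk q.2)) := by
      intro p _
      have h1 : ((p.1 : ℕ), (p.2 : ℕ)) ∈ allE k := mem_allE p.1.isLt p.2.isLt
      have := List.mem_map_of_mem (f := fun q : ℕ × ℕ => (c hk q.1, c hk q.2)) h1
      simpa [hcself] using this
    have hnd : (Finset.univ : Finset (Fin k × Fin k)).toList.Nodup := Finset.nodup_toList _
    have hsp := hnd.subperm hsub
    have hlen : ((allE k).map (fun q => (c hk q.1, c hk q.2))).length ≤
        (Finset.univ : Finset (Fin k × Fin k)).toList.length := by
      rw [List.length_map, length_allE k hk, Finset.length_toList]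
      simp [pow_two]
    exact (hsp.perm_of_length_le hlen).symm
  · -- product
    have h0 : (⟨0, hk⟩ : Fin k) = c hk 0 := Fin.ext (by simp [c])
    rw [List.map_map]
    have : ((fun p : Fin k × Fin k => Matrix.single p.1 p.2 (1 : F)) ∘
        fun q : ℕ × ℕ => (c hk q.1, c hk q.2)) = f F hk := rfl
    rw [this, prod_allE, h0]
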